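/- arXiv:1810.08953 — 3 statements merged into one kernel-verified Lean document; each statement's English description precedes it below -/
import Mathlib

section
/- In the formal power series ring ℚ⟦x,y⟧, substituting the series x + y − xy into the power series f(t) = Σ_{m≥1} t^m/m yields f(x) + f(y); that is, Σ_{m≥1} (x + y − xy)^m/m = Σ_{m≥1} x^m/m + Σ_{m≥1} y^m/m. (The series Σ_{m≥1} t^m/m is the logarithm of the multiplicative formal group law.) -/
open Finset

noncomputable section

namespace FGL

variable {R : Type*} [CommRing R]

/-- The coefficient of `x^i y^j` in a two-variable power series. -/
def coeff2 (R : Type*) [CommRing R] (i j : ℕ) (G : MvPowerSeries (Fin 2) R) : R :=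
  MvPowerSeries.coeff (Finsupp.single 0 i + Finsupp.single 1 j) G

/-- Substitution of two multivariate power series `a`, `b` (with zero constant
term) into a two-variable power series `G`, i.e. `G(a,b)`. -/
def subst2 {σ : Type*} (a b : MvPowerSeries σ R) (G : MvPowerSeries (Fin 2) R) :
    MvPowerSeries σ R :=
  fun d => ∑ p ∈ range ((d.sum fun _ e => e) + 1) ×ˢ range ((d.sum fun _ e => e) + 1),
    coeff2 R p.1 p.2 G * MvPowerSeries.coeff d (a ^ p.1 * b ^ p.2)

/-- Substitution of a multivariate power series `a` (with zero constant term)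
into a one-variable power series `f`, i.e. `f(a)`. -/
def substM {σ : Type*} (a : MvPowerSeries σ R) (f : PowerSeries R) : MvPowerSeries σ R :=
  fun d => ∑ k ∈ range ((d.sum fun _ e => e) + 1),
    PowerSeries.coeff k f * MvPowerSeries.coeff d (a ^ k)

/-- Substitution of a one-variable power series `a` (with zero constant term)
into a one-variable power series `f`, i.e. `f(a)`. -/
def substP (a f : PowerSeries R) : PowerSeries R :=
  PowerSeries.mk fun n => ∑ k ∈ range (n + 1),
    PowerSeries.coeff k f * PowerSeries.coeff n (a ^ k)

/-- Substitution of two one-variable power series `a`, `b` (with zero constant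
term) into a two-variable power series `G`, i.e. `G(a,b)`. -/
def subst2P (a b : PowerSeries R) (G : MvPowerSeries (Fin 2) R) : PowerSeries R :=
  PowerSeries.mk fun n => ∑ p ∈ range (n + 1) ×ˢ range (n + 1),
    coeff2 R p.1 p.2 G * PowerSeries.coeff n (a ^ p.1 * b ^ p.2)

/-- `G ∈ R⟦x,y⟧` is a (one-dimensional, commutative) formal group law over `R`:
`G(x,0) = x`, `G(0,y) = y`, `G(x,y) = G(y,x)`, and `G(G(x,y),z) = G(x,G(y,z))`. -/
def IsFGL (G : MvPowerSeries (Fin 2) R) : Prop :=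
  subst2 (MvPowerSeries.X 0) 0 G = MvPowerSeries.X 0 ∧
  subst2 0 (MvPowerSeries.X 1) G = MvPowerSeries.X 1 ∧
  subst2 (MvPowerSeries.X 1) (MvPowerSeries.X 0) G = G ∧
  subst2 (subst2 (MvPowerSeries.X 0) (MvPowerSeries.X 1) G)
      (MvPowerSeries.X 2 : MvPowerSeries (Fin 3) R) G
    = subst2 (MvPowerSeries.X 0) (subst2 (MvPowerSeries.X 1) (MvPowerSeries.X 2) G) G

/-- `f ∈ R⟦t⟧` is a homomorphism of formal group laws `G₁ → G₂`: it has zero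
constant term and satisfies `G₂(f(x), f(y)) = f(G₁(x,y))`. -/
def IsHom (G₁ G₂ : MvPowerSeries (Fin 2) R) (f : PowerSeries R) : Prop :=
  PowerSeries.constantCoeff f = 0 ∧
  subst2 (substM (MvPowerSeries.X 0) f) (substM (MvPowerSeries.X 1) f) G₂ = substM G₁ f

/-- `f ∈ R⟦t⟧` is a logarithm for `G`: `f(0) = 0`, `f'(0) = 1`, and
`f(G(x,y)) = f(x) + f(y)`. -/
def IsLog (G : MvPowerSeries (Fin 2) R) (f : PowerSeries R) : Prop :=
  PowerSeries.coeff 0 f = 0 ∧ PowerSeries.coeff 1 f = 1 ∧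
  substM G f = substM (MvPowerSeries.X 0) f + substM (MvPowerSeries.X 1) f

/-- The `n`-series of `G`: `[1]_G(t) = t`, `[n+1]_G(t) = G([n]_G(t), t)`. -/
def nSeries (G : MvPowerSeries (Fin 2) R) : ℕ → PowerSeries R
  | 0 => 0
  | 1 => PowerSeries.X
  | n + 2 => subst2P (nSeries G (n + 1)) PowerSeries.X G

end FGL

namespace StatementSixAux

set_option maxRecDepth 10000

private lemma one_sub_X_pow (m : ℕ) :
    (1 - PowerSeries.X : PowerSeries ℚ) ^ m
      = ∑ a ∈ range (m + 1), PowerSeries.C ((-1) ^ a * (m.choose a : ℚ)) * PowerSeries.X ^ a := by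
  have h : (1 - PowerSeries.X : PowerSeries ℚ) = (-PowerSeries.X) + 1 := by ring
  rw [h, add_pow]
  refine Finset.sum_congr rfl fun a _ => ?_
  rw [one_pow, mul_one, neg_pow, map_mul, map_pow, map_neg, map_one, map_natCast]
  ring

lemma coeff_one_sub_X_pow (m c : ℕ) :
    PowerSeries.coeff c ((1 - PowerSeries.X) ^ m) = (-1) ^ c * (m.choose c : ℚ) := by
  rw [one_sub_X_pow, map_sum]
  simp only [PowerSeries.coeff_C_mul, PowerSeries.coeff_X_pow, mul_ite, mul_one, mul_zero]
  rw [Finset.sum_ite_eq (range (m+1)) c]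
  simp only [mem_range]
  split_ifs with h
  · rfl
  · rw [Nat.choose_eq_zero_of_lt (by omega), Nat.cast_zero, mul_zero]

lemma key (j n : ℕ) (hj : 1 ≤ j) :
    ∑ c ∈ range (n + 1), (-1 : ℚ) ^ c * (j.choose c : ℚ) * ((n - c).choose (j-1) : ℚ)
      = if n = j - 1 then 1 else 0 := by
  obtain ⟨d, rfl⟩ : ∃ d, j = d + 1 := ⟨j - 1, by omega⟩
  set g : PowerSeries ℚ := PowerSeries.X ^ d * (PowerSeries.invOneSubPow ℚ (d+1)).val with hg
  have hgc : ∀ b, PowerSeries.coeff b g = ((b.choose d : ℕ) : ℚ) := by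
    intro b
    rw [hg, PowerSeries.coeff_X_pow_mul', PowerSeries.invOneSubPow_val_succ_eq_mk_add_choose]
    split_ifs with h
    · rw [PowerSeries.coeff_mk]
      congr 2
      omega
    · rw [Nat.choose_eq_zero_of_lt (by omega), Nat.cast_zero]
  have hprod : (1 - PowerSeries.X : PowerSeries ℚ) ^ (d+1) * g = PowerSeries.X ^ d := by
    rw [hg, ← mul_assoc, mul_comm ((1 - PowerSeries.X : PowerSeries ℚ) ^ (d+1)), mul_assoc,
      ← PowerSeries.invOneSubPow_inv_eq_one_sub_pow, Units.inv_val, mul_one]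
  have h2 := congrArg (PowerSeries.coeff n) hprod
  rw [PowerSeries.coeff_mul, Finset.Nat.sum_antidiagonal_eq_sum_range_succ_mk,
    PowerSeries.coeff_X_pow] at h2
  simp only [Nat.add_sub_cancel]
  rw [← h2]
  refine Finset.sum_congr rfl fun c hc => ?_
  rw [coeff_one_sub_X_pow, hgc]

lemma one_sub_pow {R : Type*} [CommRing R] (z : R) (m : ℕ) :
    (1 - z) ^ m = ∑ a ∈ range (m + 1), (-1 : R) ^ a * (m.choose a : R) * z ^ a := by
  have h : (1 - z) = -z + 1 := by ring
  rw [h, add_pow]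
  refine Finset.sum_congr rfl fun a _ => ?_
  rw [one_pow, mul_one, neg_pow]
  ring

lemma finsupp2 (i j p q : ℕ) :
    (Finsupp.single (0 : Fin 2) i + Finsupp.single 1 j
      = Finsupp.single 0 p + Finsupp.single 1 q) ↔ (i = p ∧ j = q) := by
  constructor
  · intro h
    have h0 := DFunLike.congr_fun h 0
    have h1 := DFunLike.congr_fun h 1
    simp [Finsupp.single_apply] at h0 h1
    exact ⟨h0, h1⟩
  · rintro ⟨rfl, rfl⟩; rfl

lemma mono (i j p q : ℕ) :
    MvPowerSeries.coeff (Finsupp.single 0 i + Finsupp.single 1 j)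
      ((MvPowerSeries.X 0 : MvPowerSeries (Fin 2) ℚ) ^ p * MvPowerSeries.X 1 ^ q)
      = if i = p ∧ j = q then 1 else 0 := by
  rw [MvPowerSeries.X_pow_eq, MvPowerSeries.X_pow_eq, MvPowerSeries.monomial_mul_monomial,
    one_mul, MvPowerSeries.coeff_monomial]
  congr 1
  rw [eq_iff_iff]
  exact finsupp2 i j p q

lemma expandF (k : ℕ) :
    ((MvPowerSeries.X 0 + MvPowerSeries.X 1 - MvPowerSeries.X 0 * MvPowerSeries.X 1 :
        MvPowerSeries (Fin 2) ℚ)) ^ k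
      = ∑ m ∈ range (k + 1), ∑ a ∈ range (m + 1),
          MvPowerSeries.C ((-1) ^ a * (m.choose a : ℚ) * (k.choose m : ℚ))
            * (MvPowerSeries.X 0 ^ (k - m + a) * MvPowerSeries.X 1 ^ m) := by
  have hF : (MvPowerSeries.X 0 + MvPowerSeries.X 1 - MvPowerSeries.X 0 * MvPowerSeries.X 1 :
      MvPowerSeries (Fin 2) ℚ)
      = (MvPowerSeries.X 1 * (1 - MvPowerSeries.X 0)) + MvPowerSeries.X 0 := by ring
  rw [hF, add_pow]
  refine Finset.sum_congr rfl fun m _ => ?_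
  rw [mul_pow, one_sub_pow (MvPowerSeries.X 0 : MvPowerSeries (Fin 2) ℚ) m, Finset.mul_sum,
    Finset.sum_mul, Finset.sum_mul]
  refine Finset.sum_congr rfl fun a _ => ?_
  rw [pow_add, map_mul, map_mul, map_pow, map_neg, map_one, map_natCast, map_natCast]
  ring

lemma coeffF (i j k : ℕ) (hk : k ≤ i + j) :
    MvPowerSeries.coeff (Finsupp.single 0 i + Finsupp.single 1 j)
      ((MvPowerSeries.X 0 + MvPowerSeries.X 1 - MvPowerSeries.X 0 * MvPowerSeries.X 1 :
        MvPowerSeries (Fin 2) ℚ) ^ k)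
      = (-1 : ℚ) ^ (i + j - k) * (k.choose j : ℚ) * (j.choose (i + j - k) : ℚ) := by
  rw [expandF, map_sum]
  simp only [map_sum, MvPowerSeries.coeff_C_mul, mono, mul_ite, mul_one, mul_zero]
  -- condition: i = k - m + a ∧ j = m
  have step : ∀ m ∈ range (k + 1),
      (∑ a ∈ range (m + 1), if i = k - m + a ∧ j = m then
        (-1 : ℚ) ^ a * (m.choose a : ℚ) * (k.choose m : ℚ) else 0)
      = if j = m then
          (∑ a ∈ range (m + 1), if a = i + m - k then
            (-1 : ℚ) ^ a * (m.choose a : ℚ) * (k.choose m : ℚ) else 0) else 0 := by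
    intro m hm
    rw [mem_range] at hm
    split_ifs with hjm
    · subst hjm
      refine Finset.sum_congr rfl fun a ha => ?_
      rw [mem_range] at ha
      congr 1
      rw [eq_iff_iff]
      constructor
      · rintro ⟨h1, -⟩; omega
      · intro h; omega
    · refine Finset.sum_eq_zero fun a ha => ?_
      rw [if_neg (by tauto)]
  rw [Finset.sum_congr rfl step, Finset.sum_ite_eq (range (k+1)) j]
  simp only [mem_range]
  by_cases hjk : j < k + 1
  · rw [if_pos hjk, Finset.sum_ite_eq' (range (j+1)) (i + j - k)]
    simp only [mem_range]
    by_cases hik : i + j - k < j + 1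
    · rw [if_pos hik]
      ring
    · rw [if_neg hik]
      rw [Nat.choose_eq_zero_of_lt (show j < i + j - k by omega), Nat.cast_zero, mul_zero]
  · rw [if_neg hjk]
    rw [Nat.choose_eq_zero_of_lt (show k < j by omega), Nat.cast_zero, mul_zero, zero_mul]

lemma main_aux (i j : ℕ) :
    (∑ k ∈ range (i+j+1), (if k = 0 then 0 else 1/(k:ℚ))
        * ((-1 : ℚ)^(i+j-k) * (k.choose j : ℚ) * (j.choose (i+j-k) : ℚ)))
    = (∑ k ∈ range (i+j+1), (if k = 0 then 0 else 1/(k:ℚ)) * (if i = k ∧ j = 0 then 1 else 0))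
    + (∑ k ∈ range (i+j+1), (if k = 0 then 0 else 1/(k:ℚ)) * (if i = 0 ∧ j = k then 1 else 0)) := by
  by_cases hj : j = 0
  · subst hj
    simp only [Nat.add_zero, and_true]
    have h1 : (∑ k ∈ range (i+1), (if k = 0 then 0 else 1/(k:ℚ))
        * ((-1 : ℚ)^(i-k) * (k.choose 0 : ℚ) * ((0:ℕ).choose (i-k) : ℚ)))
        = (if i = 0 then 0 else 1/(i:ℚ)) := by
      rw [Finset.sum_eq_single i]
      · rw [Nat.sub_self, pow_zero, Nat.choose_zero_right, Nat.choose_self, Nat.cast_one,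
          one_mul, mul_one, mul_one]
      · intro k hk hki
        rw [mem_range] at hk
        rw [Nat.choose_eq_zero_of_lt (show 0 < i - k by omega), Nat.cast_zero, mul_zero, mul_zero]
      · intro h
        exact absurd (self_mem_range_succ i) h
    have h2 : (∑ k ∈ range (i+1), (if k = 0 then 0 else 1/(k:ℚ)) * (if i = k then 1 else 0))
        = (if i = 0 then 0 else 1/(i:ℚ)) := by
      rw [Finset.sum_eq_single i]
      · rw [if_pos (rfl : i = i), mul_one]
      · intro k hk hki
        rw [if_neg (show ¬ i = k from fun h => hki h.symm), mul_zero]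
      · intro h
        exact absurd (self_mem_range_succ i) h
    have h3 : (∑ k ∈ range (i+1), (if k = 0 then 0 else 1/(k:ℚ))
        * (if i = 0 ∧ (0:ℕ) = k then 1 else 0)) = 0 := by
      refine Finset.sum_eq_zero fun k hk => ?_
      by_cases hk0 : k = 0
      · subst hk0; rw [if_pos (rfl : (0:ℕ) = 0), zero_mul]
      · rw [if_neg (show ¬(i = 0 ∧ (0:ℕ) = k) from fun h => hk0 h.2.symm), mul_zero]
    rw [h1, h2, h3, add_zero]
  · -- j ≥ 1
    have hj1 : 1 ≤ j := by omega
    have hn1 : 1 ≤ i + j := by omega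
    -- RHS
    have h2 : (∑ k ∈ range (i+j+1), (if k = 0 then 0 else 1/(k:ℚ))
        * (if i = k ∧ j = 0 then 1 else 0)) = 0 := by
      refine Finset.sum_eq_zero fun k hk => ?_
      rw [if_neg (show ¬(i = k ∧ j = 0) from fun h => hj h.2), mul_zero]
    have h3 : (∑ k ∈ range (i+j+1), (if k = 0 then 0 else 1/(k:ℚ))
        * (if i = 0 ∧ j = k then 1 else 0)) = if i = 0 then 1/(j:ℚ) else 0 := by
      rw [Finset.sum_eq_single j]
      · rw [if_neg (show ¬ j = 0 from hj)]
        by_cases hi : i = 0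
        · rw [if_pos (show i = 0 ∧ j = j from ⟨hi, rfl⟩), mul_one, if_pos hi]
        · rw [if_neg (show ¬(i = 0 ∧ j = j) from fun h => hi h.1), mul_zero, if_neg hi]
      · intro k hk hkj
        rw [if_neg (show ¬(i = 0 ∧ j = k) from fun h => hkj h.2.symm), mul_zero]
      · intro h
        exact absurd (mem_range.2 (by omega)) h
    rw [h2, h3, zero_add]
    -- LHS
    rw [Finset.sum_range_succ']
    rw [if_pos (rfl : (0:ℕ) = 0), zero_mul, add_zero]
    rw [← Finset.sum_range_reflect]
    have step : ∀ c ∈ range (i + j), (if i+j-1-c+1 = 0 then 0 else 1/((i+j-1-c+1 : ℕ):ℚ))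
        * ((-1 : ℚ)^(i+j-(i+j-1-c+1)) * ((i+j-1-c+1).choose j : ℚ)
            * (j.choose (i+j-(i+j-1-c+1)) : ℚ))
        = (1/(j:ℚ)) * ((-1 : ℚ)^c * (j.choose c : ℚ) * ((i+j-1-c).choose (j-1) : ℚ)) := by
      intro c hc
      rw [mem_range] at hc
      have e1 : i+j-1-c+1 = i+j-c := by omega
      have e2 : i+j-(i+j-c) = c := by omega
      rw [e1, e2, if_neg (show ¬ i+j-c = 0 by omega)]
      have hnat : (i+j-c) * Nat.choose (i+j-1-c) (j-1) = Nat.choose (i+j-c) j * j := by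
        have h := Nat.add_one_mul_choose_eq (i+j-1-c) (j-1)
        rw [show i+j-1-c+1 = i+j-c by omega, show j-1+1 = j by omega] at h
        exact h
      have hq : ((i+j-c : ℕ):ℚ) * (((i+j-1-c).choose (j-1) : ℕ):ℚ)
          = (((i+j-c).choose j : ℕ):ℚ) * (j:ℚ) := by exact_mod_cast congrArg Nat.cast hnat
      have hcne : ((i+j-c : ℕ):ℚ) ≠ 0 := by
        exact_mod_cast (show (i+j-c : ℕ) ≠ 0 by omega)
      have hjne : ((j : ℕ):ℚ) ≠ 0 := by exact_mod_cast hj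
      rw [div_mul_eq_mul_div, div_mul_eq_mul_div, one_mul, one_mul,
        div_eq_div_iff hcne hjne]
      linear_combination (-(-1:ℚ)^c * (j.choose c : ℚ)) * hq
    rw [Finset.sum_congr rfl step, ← Finset.mul_sum]
    have hkey := key j (i+j-1) hj1
    rw [show i+j-1+1 = i+j by omega] at hkey
    rw [hkey]
    by_cases hi : i = 0
    · rw [if_pos (show i+j-1 = j-1 by omega), if_pos hi, mul_one]
    · rw [if_neg (show ¬ i+j-1 = j-1 by omega), if_neg hi, mul_zero]

end StatementSixAux

open StatementSixAux in
/-- Substituting `x + y - xy` into `f(t) = Σ_{m ≥ 1} t^m / m` in `ℚ⟦x,y⟧` yields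
`f(x) + f(y)`: the series `Σ_{m ≥ 1} t^m / m` is the logarithm of the
multiplicative formal group law. -/
theorem statement_6 :
    FGL.substM
        (MvPowerSeries.X 0 + MvPowerSeries.X 1 -
          MvPowerSeries.X 0 * MvPowerSeries.X 1 : MvPowerSeries (Fin 2) ℚ)
        (PowerSeries.mk fun m => if m = 0 then 0 else (1 : ℚ) / m)
      = FGL.substM (MvPowerSeries.X 0 : MvPowerSeries (Fin 2) ℚ)
          (PowerSeries.mk fun m => if m = 0 then 0 else (1 : ℚ) / m)
        + FGL.substM (MvPowerSeries.X 1 : MvPowerSeries (Fin 2) ℚ)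
          (PowerSeries.mk fun m => if m = 0 then 0 else (1 : ℚ) / m) := by
  funext d
  have hd : d = Finsupp.single 0 (d 0) + Finsupp.single 1 (d 1) := by
    ext a; fin_cases a <;> simp [Finsupp.single_apply]
  have hn : (d.sum fun _ e => e) = d 0 + d 1 := by
    rw [Finsupp.sum_fintype _ _ fun _ => rfl, Fin.sum_univ_two]
  rw [show ∀ A B : MvPowerSeries (Fin 2) ℚ, (A + B) d = A d + B d from fun _ _ => rfl]
  simp only [FGL.substM, hn, PowerSeries.coeff_mk]
  have e1 : ∀ k ∈ range (d 0 + d 1 + 1),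
      (if k = 0 then 0 else (1:ℚ)/(k:ℚ)) * MvPowerSeries.coeff d
        ((MvPowerSeries.X 0 + MvPowerSeries.X 1 -
          MvPowerSeries.X 0 * MvPowerSeries.X 1 : MvPowerSeries (Fin 2) ℚ) ^ k)
      = (if k = 0 then 0 else 1/(k:ℚ))
        * ((-1 : ℚ)^(d 0 + d 1 - k) * (k.choose (d 1) : ℚ) * ((d 1).choose (d 0 + d 1 - k) : ℚ)) := by
    intro k hk
    rw [mem_range] at hk
    conv_lhs => rw [hd]
    rw [coeffF (d 0) (d 1) k (by omega)]
  have e2 : ∀ k ∈ range (d 0 + d 1 + 1),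
      (if k = 0 then 0 else (1:ℚ)/(k:ℚ)) * MvPowerSeries.coeff d
        ((MvPowerSeries.X 0 : MvPowerSeries (Fin 2) ℚ) ^ k)
      = (if k = 0 then 0 else 1/(k:ℚ)) * (if d 0 = k ∧ d 1 = 0 then 1 else 0) := by
    intro k _
    have h := mono (d 0) (d 1) k 0
    rw [pow_zero, mul_one] at h
    conv_lhs => rw [hd]
    rw [h]
  have e3 : ∀ k ∈ range (d 0 + d 1 + 1),
      (if k = 0 then 0 else (1:ℚ)/(k:ℚ)) * MvPowerSeries.coeff d
        ((MvPowerSeries.X 1 : MvPowerSeries (Fin 2) ℚ) ^ k)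
      = (if k = 0 then 0 else 1/(k:ℚ)) * (if d 0 = 0 ∧ d 1 = k then 1 else 0) := by
    intro k _
    have h := mono (d 0) (d 1) 0 k
    rw [pow_zero, one_mul] at h
    conv_lhs => rw [hd]
    rw [h]
  rw [Finset.sum_congr rfl e1, Finset.sum_congr rfl e2, Finset.sum_congr rfl e3]
  exact main_aux (d 0) (d 1)
end
end

section
/- Let k be a field of characteristic p > 0, let G₁ and G₂ be formal group laws over k, and let f ∈ k⟦t⟧ be a nonzero homomorphism from G₁ to G₂. Then there exists a natural number h ≥ 0 such that the least m with nonzero coefficient of t^m in f equals p^h; that is, the first nonzero term of f is u·t^{p^h} for some unit u ∈ k. -/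
open Finset

noncomputable section

section AuxHelpers
open Finset

theorem aux_pow_of_dvd_choose (p : ℕ) [Fact p.Prime] :
    ∀ m, 0 < m → (∀ i, 0 < i → i < m → p ∣ m.choose i) → ∃ h, m = p ^ h := by
  intro m
  induction m using Nat.strong_induction_on with
  | _ m ih =>
    intro hm hdvd
    rcases eq_or_lt_of_le (show 1 ≤ m from hm) with h1 | h1
    · exact ⟨0, by simpa using h1.symm⟩
    · have hp2 : 2 ≤ p := (Fact.out : p.Prime).two_le
      have hpm : p ∣ m := by
        have := hdvd 1 one_pos h1
        rwa [Nat.choose_one_right] at this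
      obtain ⟨q, hq⟩ := hpm
      have hq1 : 0 < q := by nlinarith
      have hqm : q < m := by nlinarith
      have key : ∀ j, 0 < j → j < q → p ∣ q.choose j := by
        intro j hj0 hjq
        have hlucas : m.choose (p * j) ≡
            (m % p).choose ((p * j) % p) * (m / p).choose ((p * j) / p) [MOD p] :=
          Choose.choose_modEq_choose_mod_mul_choose_div_nat
        have hmp : m % p = 0 := by simp [hq, Nat.mul_mod_right]
        have hmd : m / p = q := by rw [hq]; exact Nat.mul_div_cancel_left q (by omega)
        have hA : (p * j) % p = 0 := Nat.mul_mod_right p j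
        have hB : (p * j) / p = j := Nat.mul_div_cancel_left j (by omega)
        rw [hmp, hmd, hA, hB, Nat.choose_zero_right, one_mul] at hlucas
        have hdv : p ∣ m.choose (p * j) := hdvd (p * j) (by positivity) (by nlinarith)
        have := (Nat.modEq_zero_iff_dvd.mpr hdv).symm.trans hlucas
        exact Nat.modEq_zero_iff_dvd.mp this.symm
      obtain ⟨h, hh⟩ := ih q hqm hq1 key
      exact ⟨h + 1, by rw [hq, hh, pow_succ, mul_comm]⟩

namespace AuxFGL
variable {R : Type*} [CommRing R]

/-- degree of a monomial exponent -/
def dg {σ : Type*} (d : σ →₀ ℕ) : ℕ := d.sum fun _ e => e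

lemma dg_add {σ : Type*} (a b : σ →₀ ℕ) : dg (a + b) = dg a + dg b :=
  Finsupp.sum_add_index' (fun _ => rfl) (fun _ _ _ => rfl)

lemma dg_single {σ : Type*} (s : σ) (n : ℕ) : dg (Finsupp.single s n) = n :=
  Finsupp.sum_single_index rfl

lemma apply_le_dg {σ : Type*} (d : σ →₀ ℕ) (s : σ) : d s ≤ dg d := by
  by_cases h : s ∈ d.support
  · exact Finset.single_le_sum (f := fun i => d i) (fun _ _ => Nat.zero_le _) h
  · rw [Finsupp.notMem_support_iff.mp h]
    exact Nat.zero_le _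

lemma rep (d : Fin 2 →₀ ℕ) : d = Finsupp.single 0 (d 0) + Finsupp.single 1 (d 1) := by
  ext i; fin_cases i <;> simp

lemma dg_eq (d : Fin 2 →₀ ℕ) : dg d = d 0 + d 1 := by
  conv_lhs => rw [rep d]
  rw [dg_add, dg_single, dg_single]

lemma pair_apply0 (i j : ℕ) :
    (Finsupp.single (0:Fin 2) i + Finsupp.single 1 j : Fin 2 →₀ ℕ) 0 = i := by
  rw [Finsupp.add_apply]; simp

lemma pair_apply1 (i j : ℕ) :
    (Finsupp.single (0:Fin 2) i + Finsupp.single 1 j : Fin 2 →₀ ℕ) 1 = j := by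
  rw [Finsupp.add_apply]; simp

/-- vanishing below degree n -/
def vb {σ : Type*} (n : ℕ) (f : MvPowerSeries σ R) : Prop :=
  ∀ d : σ →₀ ℕ, dg d < n → f d = 0

lemma vb_mul {σ : Type*} [DecidableEq σ] {a b : ℕ} {f g : MvPowerSeries σ R}
    (hf : vb a f) (hg : vb b g) : vb (a + b) (f * g) := by
  intro d hd
  have : MvPowerSeries.coeff d (f * g) = 0 := by
    rw [MvPowerSeries.coeff_mul]
    apply Finset.sum_eq_zero
    intro p hp
    replace hp := Finset.HasAntidiagonal.mem_antidiagonal.mp hp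
    have hdg : dg p.1 + dg p.2 = dg d := by rw [← dg_add, hp]
    rcases lt_or_ge (dg p.1) a with h | h
    · rw [show MvPowerSeries.coeff p.1 f = f p.1 from rfl, hf p.1 h, zero_mul]
    · have : dg p.2 < b := by omega
      rw [show MvPowerSeries.coeff p.2 g = g p.2 from rfl, hg p.2 this, mul_zero]
  exact this

lemma vb_pow {σ : Type*} [DecidableEq σ] {a : ℕ} {f : MvPowerSeries σ R} (hf : vb a f) (n : ℕ) :
    vb (a * n) (f ^ n) := by
  induction n with
  | zero => intro d hd; omega
  | succ n ih =>
      rw [pow_succ, Nat.mul_succ]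
      exact vb_mul ih hf

lemma substM_X_apply {σ : Type*} [DecidableEq σ] (f : PowerSeries R) (s : σ) (d : σ →₀ ℕ) :
    FGL.substM (MvPowerSeries.X s) f d =
      if d = Finsupp.single s (d s) then PowerSeries.coeff (d s) f else 0 := by
  show (∑ n ∈ range ((d.sum fun _ e => e) + 1),
      PowerSeries.coeff n f * MvPowerSeries.coeff d (MvPowerSeries.X s ^ n)) = _
  split_ifs with h
  · rw [Finset.sum_eq_single_of_mem (d s)]
    · rw [MvPowerSeries.coeff_X_pow, if_pos h, mul_one]
    · rw [Finset.mem_range, Nat.lt_succ_iff]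
      exact apply_le_dg d s
    · intro n _ hne
      rw [MvPowerSeries.coeff_X_pow, if_neg, mul_zero]
      intro hc
      apply hne
      rw [hc, Finsupp.single_eq_same]
  · apply Finset.sum_eq_zero
    intro n _
    rw [MvPowerSeries.coeff_X_pow, if_neg, mul_zero]
    intro hc
    apply h
    rw [hc, Finsupp.single_eq_same]

lemma vb_substM_X {σ : Type*} [DecidableEq σ] {f : PowerSeries R} {m : ℕ}
    (hf : ∀ n < m, PowerSeries.coeff n f = 0) (s : σ) :
    vb m (FGL.substM (MvPowerSeries.X s) f) := by
  intro d hd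
  rw [substM_X_apply]
  split_ifs with h
  · apply hf
    calc d s ≤ dg d := apply_le_dg d s
    _ < m := hd
  · rfl

lemma coeff2_apply (G : MvPowerSeries (Fin 2) R) (i j : ℕ) :
    FGL.coeff2 R i j G = G (Finsupp.single 0 i + Finsupp.single 1 j) := rfl

lemma coeff_eq_coeff2 (G : MvPowerSeries (Fin 2) R) (d : Fin 2 →₀ ℕ) :
    G d = FGL.coeff2 R (d 0) (d 1) G := by
  rw [coeff2_apply]; congr 1; exact rep d

lemma coeff2_left {G : MvPowerSeries (Fin 2) R}
    (hG : FGL.subst2 (MvPowerSeries.X 0) 0 G = MvPowerSeries.X 0) (n : ℕ) :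
    FGL.coeff2 R n 0 G = if n = 1 then 1 else 0 := by
  have h := congrFun hG (Finsupp.single (0 : ℕ) n)
  have hdg : ((Finsupp.single (0:ℕ) n).sum fun _ e => e) = n := dg_single 0 n
  have hL : FGL.subst2 (MvPowerSeries.X 0) (0 : MvPowerSeries ℕ R) G
        (Finsupp.single (0 : ℕ) n) = FGL.coeff2 R n 0 G := by
    show (∑ p ∈ range (((Finsupp.single (0:ℕ) n).sum fun _ e => e) + 1) ×ˢ
        range (((Finsupp.single (0:ℕ) n).sum fun _ e => e) + 1),
        FGL.coeff2 R p.1 p.2 G *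
          MvPowerSeries.coeff (Finsupp.single (0:ℕ) n)
            ((MvPowerSeries.X 0 : MvPowerSeries ℕ R) ^ p.1 * 0 ^ p.2)) = _
    rw [Finset.sum_eq_single_of_mem ((n, 0) : ℕ × ℕ)]
    · rw [pow_zero, mul_one, MvPowerSeries.coeff_X_pow, if_pos rfl, mul_one]
    · rw [Finset.mem_product, Finset.mem_range, Finset.mem_range, hdg]
      omega
    · rintro ⟨s, t⟩ _ hne
      rcases Nat.eq_zero_or_pos t with ht | ht
      · subst ht
        rw [pow_zero, mul_one, MvPowerSeries.coeff_X_pow, if_neg, mul_zero]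
        intro hc
        apply hne
        have := (Finsupp.single_injective (0 : ℕ)).eq_iff.mp hc
        simp [this]
      · rw [zero_pow (by omega), mul_zero, map_zero, mul_zero]
  rw [hL] at h
  rw [h]
  rw [show (MvPowerSeries.X 0 : MvPowerSeries ℕ R) (Finsupp.single (0:ℕ) n)
    = MvPowerSeries.coeff (Finsupp.single (0:ℕ) n) (MvPowerSeries.X 0) from rfl,
    MvPowerSeries.coeff_X]
  by_cases hn : n = 1
  · rw [if_pos (by rw [hn]), if_pos hn]
  · rw [if_neg, if_neg hn]
    intro hc
    exact hn ((Finsupp.single_injective (0 : ℕ)).eq_iff.mp hc)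

lemma coeff2_right {G : MvPowerSeries (Fin 2) R}
    (hG : FGL.subst2 0 (MvPowerSeries.X 1) G = MvPowerSeries.X 1) (n : ℕ) :
    FGL.coeff2 R 0 n G = if n = 1 then 1 else 0 := by
  have h := congrFun hG (Finsupp.single (1 : ℕ) n)
  have hdg : ((Finsupp.single (1:ℕ) n).sum fun _ e => e) = n := dg_single 1 n
  have hL : FGL.subst2 (0 : MvPowerSeries ℕ R) (MvPowerSeries.X 1) G
        (Finsupp.single (1 : ℕ) n) = FGL.coeff2 R 0 n G := by
    show (∑ p ∈ range (((Finsupp.single (1:ℕ) n).sum fun _ e => e) + 1) ×ˢ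
        range (((Finsupp.single (1:ℕ) n).sum fun _ e => e) + 1),
        FGL.coeff2 R p.1 p.2 G *
          MvPowerSeries.coeff (Finsupp.single (1:ℕ) n)
            ((0 : MvPowerSeries ℕ R) ^ p.1 * MvPowerSeries.X 1 ^ p.2)) = _
    rw [Finset.sum_eq_single_of_mem ((0, n) : ℕ × ℕ)]
    · rw [pow_zero, one_mul, MvPowerSeries.coeff_X_pow, if_pos rfl, mul_one]
    · rw [Finset.mem_product, Finset.mem_range, Finset.mem_range, hdg]
      omega
    · rintro ⟨s, t⟩ _ hne
      rcases Nat.eq_zero_or_pos s with hs | hs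
      · subst hs
        rw [pow_zero, one_mul, MvPowerSeries.coeff_X_pow, if_neg, mul_zero]
        intro hc
        apply hne
        have := (Finsupp.single_injective (1 : ℕ)).eq_iff.mp hc
        simp [this]
      · rw [zero_pow (by omega), zero_mul, map_zero, mul_zero]
  rw [hL] at h
  rw [h]
  rw [show (MvPowerSeries.X 1 : MvPowerSeries ℕ R) (Finsupp.single (1:ℕ) n)
    = MvPowerSeries.coeff (Finsupp.single (1:ℕ) n) (MvPowerSeries.X 1) from rfl,
    MvPowerSeries.coeff_X]
  by_cases hn : n = 1
  · rw [if_pos (by rw [hn]), if_pos hn]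
  · rw [if_neg, if_neg hn]
    intro hc
    exact hn ((Finsupp.single_injective (1 : ℕ)).eq_iff.mp hc)

end AuxFGL
end AuxHelpers

/-- Over a field of characteristic `p > 0`, the first nonzero term of a nonzero
homomorphism of formal group laws occurs in degree `p^h` for some `h ≥ 0`. -/
theorem statement_10 {k : Type*} [Field k] (p : ℕ) (hp : 0 < p) [CharP k p]
    (G₁ G₂ : MvPowerSeries (Fin 2) k) (h₁ : FGL.IsFGL G₁) (h₂ : FGL.IsFGL G₂)
    (f : PowerSeries k) (hf : FGL.IsHom G₁ G₂ f) (hf0 : f ≠ 0) :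
    ∃ h : ℕ, (∀ m < p ^ h, PowerSeries.coeff m f = 0) ∧
      PowerSeries.coeff (p ^ h) f ≠ 0 := by
  classical
  have hex : ∃ n, PowerSeries.coeff n f ≠ 0 := by
    by_contra hcon
    push_neg at hcon
    exact hf0 (PowerSeries.ext fun n => by rw [hcon n, map_zero])
  set m := Nat.find hex with hmdef
  have hm : PowerSeries.coeff m f ≠ 0 := Nat.find_spec hex
  have hlt : ∀ n < m, PowerSeries.coeff n f = 0 := by
    intro n hn
    by_contra hc
    exact Nat.find_min hex hn hc
  have hm1 : 1 ≤ m := by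
    rcases Nat.eq_zero_or_pos m with h0 | h0
    · exfalso
      apply hm
      rw [h0, PowerSeries.coeff_zero_eq_constantCoeff]
      exact hf.1
    · exact h0
  have hppr : p.Prime := (CharP.char_is_prime_or_zero k p).resolve_right (by omega)
  haveI : Fact p.Prime := ⟨hppr⟩
  -- abbreviations
  set A : MvPowerSeries (Fin 2) k := FGL.substM (MvPowerSeries.X 0) f with hA
  set B : MvPowerSeries (Fin 2) k := FGL.substM (MvPowerSeries.X 1) f with hB
  have hvbA : AuxFGL.vb m A := AuxFGL.vb_substM_X hlt 0
  have hvbB : AuxFGL.vb m B := AuxFGL.vb_substM_X hlt 1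
  set L : MvPowerSeries (Fin 2) k := MvPowerSeries.X 0 + MvPowerSeries.X 1 with hL
  set H : MvPowerSeries (Fin 2) k := G₁ - L with hH
  have hsplit : G₁ = L + H := by rw [hH]; ring
  -- L vanishes below degree 1
  have hvbL : AuxFGL.vb 1 L := by
    intro d' hd'
    have h0 : AuxFGL.dg d' = 0 := by omega
    have h00 : d' 0 = 0 ∧ d' 1 = 0 := by
      have := AuxFGL.dg_eq d'
      omega
    have hd'0 : d' = 0 := by
      rw [AuxFGL.rep d', h00.1, h00.2]
      simp
    subst hd'0
    rw [hL]
    show MvPowerSeries.coeff 0 ((MvPowerSeries.X 0 : MvPowerSeries (Fin 2) k) + MvPowerSeries.X 1) = 0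
    rw [map_add, MvPowerSeries.coeff_X, MvPowerSeries.coeff_X, if_neg, if_neg, add_zero]
    · exact fun hc => by simpa using (Finsupp.single_eq_zero.mp hc.symm)
    · exact fun hc => by simpa using (Finsupp.single_eq_zero.mp hc.symm)
  -- H vanishes below degree 2
  have hvbH : AuxFGL.vb 2 H := by
    intro d' hd'
    have hdge := AuxFGL.dg_eq d'
    have hrep := AuxFGL.rep d'
    show MvPowerSeries.coeff d' (G₁ - L) = 0
    rw [map_sub]
    have hG1 : MvPowerSeries.coeff d' G₁ = FGL.coeff2 k (d' 0) (d' 1) G₁ :=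
      AuxFGL.coeff_eq_coeff2 G₁ d'
    have hcase : (d' 0 = 0 ∧ d' 1 = 0) ∨ (d' 0 = 0 ∧ d' 1 = 1) ∨ (d' 0 = 1 ∧ d' 1 = 0) := by
      omega
    rcases hcase with ⟨ha, hb⟩ | ⟨ha, hb⟩ | ⟨ha, hb⟩
    · -- (0,0)
      have hd'0 : d' = 0 := by rw [hrep, ha, hb]; simp
      rw [hG1, ha, hb, AuxFGL.coeff2_left h₁.1 0, if_neg (by omega)]
      subst hd'0
      rw [hL, map_add, MvPowerSeries.coeff_X, MvPowerSeries.coeff_X, if_neg, if_neg]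
      · ring
      · exact fun hc => by simpa using (Finsupp.single_eq_zero.mp hc.symm)
      · exact fun hc => by simpa using (Finsupp.single_eq_zero.mp hc.symm)
    · -- (0,1)
      have hd'0 : d' = Finsupp.single 1 1 := by rw [hrep, ha, hb]; simp
      rw [hG1, ha, hb, AuxFGL.coeff2_right h₁.2.1 1, if_pos rfl]
      subst hd'0
      rw [hL, map_add, MvPowerSeries.coeff_X, MvPowerSeries.coeff_X, if_neg, if_pos rfl]
      · ring
      · intro hc
        have := DFunLike.congr_fun hc 1
        simp [Finsupp.single_apply] at this
    · -- (1,0)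
      have hd'0 : d' = Finsupp.single 0 1 := by rw [hrep, ha, hb]; simp
      rw [hG1, ha, hb, AuxFGL.coeff2_left h₁.1 1, if_pos rfl]
      subst hd'0
      rw [hL, map_add, MvPowerSeries.coeff_X, MvPowerSeries.coeff_X, if_pos rfl, if_neg]
      · ring
      · intro hc
        have := DFunLike.congr_fun hc 0
        simp [Finsupp.single_apply] at this
  -- key divisibility
  have key : ∀ i, 0 < i → i < m → p ∣ m.choose i := by
    intro i hi0 him
    set d : Fin 2 →₀ ℕ := Finsupp.single 0 i + Finsupp.single 1 (m - i) with hd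
    have hd0 : d 0 = i := AuxFGL.pair_apply0 i (m - i)
    have hd1 : d 1 = m - i := AuxFGL.pair_apply1 i (m - i)
    have hdg : AuxFGL.dg d = m := by rw [AuxFGL.dg_eq, hd0, hd1]; omega
    have hdg' : (d.sum fun _ e => e) = m := hdg
    have hhom := congrFun hf.2 d
    rw [← hA, ← hB] at hhom
    -- LHS is zero
    have hLHS : FGL.subst2 A B G₂ d = 0 := by
      show (∑ q ∈ Finset.range ((d.sum fun _ e => e) + 1) ×ˢ
          Finset.range ((d.sum fun _ e => e) + 1),
          FGL.coeff2 k q.1 q.2 G₂ * MvPowerSeries.coeff d (A ^ q.1 * B ^ q.2)) = 0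
      apply Finset.sum_eq_zero
      rintro ⟨s, t⟩ hq
      rcases Nat.eq_zero_or_pos s with hs | hs
      · subst hs
        rcases Nat.eq_zero_or_pos t with ht | ht
        · subst ht
          rw [AuxFGL.coeff2_left h₂.1 0, if_neg (by omega), zero_mul]
        · rcases eq_or_ne t 1 with ht1 | ht1
          · subst ht1
            rw [pow_zero, one_mul, pow_one]
            rw [show MvPowerSeries.coeff d B = B d from rfl, hB,
              AuxFGL.substM_X_apply, if_neg, mul_zero]
            intro hc
            have := DFunLike.congr_fun hc 0
            rw [hd0, Finsupp.single_apply] at this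
            simp at this
            omega
          · rw [AuxFGL.coeff2_right h₂.2.1 t, if_neg ht1, zero_mul]
      · rcases Nat.eq_zero_or_pos t with ht | ht
        · subst ht
          rcases eq_or_ne s 1 with hs1 | hs1
          · subst hs1
            rw [pow_zero, mul_one, pow_one]
            rw [show MvPowerSeries.coeff d A = A d from rfl, hA,
              AuxFGL.substM_X_apply, if_neg, mul_zero]
            intro hc
            have := DFunLike.congr_fun hc 1
            rw [hd1, Finsupp.single_apply] at this
            simp at this
            omega
          · rw [AuxFGL.coeff2_left h₂.1 s, if_neg hs1, zero_mul]
        · have hvb := AuxFGL.vb_mul (AuxFGL.vb_pow hvbA s) (AuxFGL.vb_pow hvbB t)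
          have hz : (A ^ s * B ^ t) d = 0 := by
            apply hvb
            rw [hdg]
            nlinarith
          rw [show MvPowerSeries.coeff d (A ^ s * B ^ t) = (A ^ s * B ^ t) d from rfl,
            hz, mul_zero]
    -- coefficient of L^m
    have hcoeffLm : MvPowerSeries.coeff d (L ^ m) = (m.choose i : k) := by
      rw [hL, add_pow, map_sum]
      rw [Finset.sum_eq_single_of_mem i]
      · rw [MvPowerSeries.X_pow_eq, MvPowerSeries.X_pow_eq]
        rw [MvPowerSeries.monomial_mul_monomial, one_mul]
        rw [show ((m.choose i : ℕ) : MvPowerSeries (Fin 2) k)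
          = MvPowerSeries.C (σ := Fin 2) ((m.choose i : ℕ) : k) from by rw [map_natCast]]
        rw [MvPowerSeries.coeff_mul_C, MvPowerSeries.coeff_monomial, if_pos rfl, one_mul]
      · rw [Finset.mem_range]; omega
      · intro a ha hne
        rw [MvPowerSeries.X_pow_eq, MvPowerSeries.X_pow_eq]
        rw [MvPowerSeries.monomial_mul_monomial, one_mul]
        rw [show ((m.choose a : ℕ) : MvPowerSeries (Fin 2) k)
          = MvPowerSeries.C (σ := Fin 2) ((m.choose a : ℕ) : k) from by rw [map_natCast]]
        rw [MvPowerSeries.coeff_mul_C, MvPowerSeries.coeff_monomial, if_neg, zero_mul]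
        intro hc
        apply hne
        have := DFunLike.congr_fun hc 0
        rw [hd0] at this
        rw [AuxFGL.pair_apply0] at this
        omega
    -- coefficient of G₁^m
    have hcoeffG1m : MvPowerSeries.coeff d (G₁ ^ m) = (m.choose i : k) := by
      rw [hsplit, add_pow, map_sum]
      rw [Finset.sum_eq_single_of_mem m]
      · rw [Nat.sub_self, pow_zero, mul_one, Nat.choose_self, Nat.cast_one, mul_one, hcoeffLm]
      · rw [Finset.mem_range]; omega
      · intro a ha hne
        rw [Finset.mem_range] at ha
        have ham : a < m := by omega
        rw [show ((m.choose a : ℕ) : MvPowerSeries (Fin 2) k)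
          = MvPowerSeries.C (σ := Fin 2) ((m.choose a : ℕ) : k) from by rw [map_natCast]]
        rw [MvPowerSeries.coeff_mul_C]
        have hvb := AuxFGL.vb_mul (AuxFGL.vb_pow hvbL a) (AuxFGL.vb_pow hvbH (m - a))
        have hz : (L ^ a * H ^ (m - a)) d = 0 := by
          apply hvb
          rw [hdg]
          omega
        rw [show MvPowerSeries.coeff d (L ^ a * H ^ (m - a)) = (L ^ a * H ^ (m - a)) d
          from rfl, hz, zero_mul]
    -- RHS
    have hRHS : FGL.substM G₁ f d = PowerSeries.coeff m f * (m.choose i : k) := by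
      show (∑ n ∈ Finset.range ((d.sum fun _ e => e) + 1),
          PowerSeries.coeff n f * MvPowerSeries.coeff d (G₁ ^ n)) = _
      rw [hdg']
      rw [Finset.sum_eq_single_of_mem m]
      · rw [hcoeffG1m]
      · rw [Finset.mem_range]; omega
      · intro n hn hne
        rw [Finset.mem_range] at hn
        rw [hlt n (by omega), zero_mul]
    rw [hLHS, hRHS] at hhom
    have hchoose0 : ((m.choose i : ℕ) : k) = 0 := by
      rcases mul_eq_zero.mp hhom.symm with hc | hc
      · exact absurd hc hm
      · exact hc
    exact (CharP.cast_eq_zero_iff k p _).mp hchoose0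
  obtain ⟨h, hh⟩ := aux_pow_of_dvd_choose p m hm1 key
  refine ⟨h, ?_, ?_⟩
  · rw [← hh]; exact hlt
  · rw [← hh]; exact hm
end
end

section
/- Let p be a prime of the form p = 4m + 1 for a natural number m. Then p does not divide the multinomial coefficient (4m)!/(m!)⁴; indeed, modulo p this coefficient is congruent to −(m!)^{−4}, which is nonzero. -/
open Finset

noncomputable section

/-- For a prime `p = 4m + 1`, the multinomial coefficient `(4m)!/(m!)⁴` is not
divisible by `p`; indeed, modulo `p` it is congruent to `-(m!)⁻⁴`. -/
theorem statement_16 (p m : ℕ) (hp : p.Prime) (hpm : p = 4 * m + 1) :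
    ¬ (p ∣ Nat.multinomial Finset.univ (fun _ : Fin 4 => m)) ∧
    ((Nat.multinomial Finset.univ (fun _ : Fin 4 => m) : ZMod p)
        = -((m.factorial : ZMod p))⁻¹ ^ 4) ∧
    ((Nat.multinomial Finset.univ (fun _ : Fin 4 => m) : ZMod p) ≠ 0) := by
  haveI : Fact p.Prime := ⟨hp⟩
  have hm_lt : m < p := by omega
  have hfac_ne : ((m.factorial : ZMod p)) ≠ 0 := by
    rw [Ne, ZMod.natCast_eq_zero_iff, hp.dvd_factorial]
    omega
  have hspec := Nat.multinomial_spec (Finset.univ : Finset (Fin 4)) (fun _ => m)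
  have hsum : (∑ _i : Fin 4, m) = p - 1 := by simp [hpm]
  have hprod : (∏ _i : Fin 4, m.factorial) = m.factorial ^ 4 := by
    simp [Finset.prod_const]
  rw [hsum, hprod] at hspec
  have hz : ((m.factorial : ZMod p)) ^ 4 * (Nat.multinomial Finset.univ (fun _ : Fin 4 => m) : ZMod p) = -1 := by
    have := congrArg (Nat.cast : ℕ → ZMod p) hspec
    push_cast at this
    rw [this, ZMod.wilsons_lemma]
  have heq : ((Nat.multinomial Finset.univ (fun _ : Fin 4 => m) : ZMod p)
      = -((m.factorial : ZMod p))⁻¹ ^ 4) := by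
    field_simp at hz ⊢
    linear_combination hz
  have hne : ((Nat.multinomial Finset.univ (fun _ : Fin 4 => m) : ZMod p) ≠ 0) := by
    rw [heq]
    simp [pow_eq_zero_iff, inv_eq_zero, hfac_ne]
  refine ⟨fun hdvd => hne ?_, heq, hne⟩
  rwa [ZMod.natCast_eq_zero_iff]
end
end
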